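/- Let α ∈ (−1,1), m ∈ ℕ, and g(x) = x for x ∈ [0,1]. Suppose f is of Type(α, m+1, {0}). For n ∈ ℕ let x_j := κ^{j/n−1} for j = 0, …, n, N_j := 1, and define Q_{κ,n,m}^Λ[f,g] := Σ_{j=1}^n Q_{N_j,κ,m}^{[x_{j−1},x_j]}[f,g]. Then there exists a positive constant c, independent of κ and n, such that for all κ > 1 and all n ∈ ℕ with n ≥ ln κ/ln 2, |∫_{1/κ}^1 f(x) e^{iκx} dx − Q_{κ,n,m}^Λ[f,g]| ≤ c κ^{−α−1} (ln κ) θ_n^{m−1}, where θ_n := κ^{1/n} − 1. -/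

import Mathlib

open scoped BigOperators
open MeasureTheory

noncomputable section

/-- Oscillatory integral `∫_a^b f(x) e^{iκ g(x)} dx`. -/
def oscInt (κ : ℝ) (f g : ℝ → ℝ) (a b : ℝ) : ℂ :=
  ∫ x in a..b, (f x : ℂ) * Complex.exp (Complex.I * κ * g x)

/-- Moment-free Filon rule: `∫_{g(t_0)}^{g(t_m)} p_m(x) e^{iκx} dx` where `p_m` is the
Lagrange polynomial interpolating `Ψ` at the points `g(t_j)`. -/
def filonQ (κ : ℝ) (m : ℕ) (g : ℝ → ℝ) (Ψ : ℝ → ℝ) (t : Fin (m+1) → ℝ) : ℂ :=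
  ∫ x in (g (t 0))..(g (t (Fin.last m))),
    (((Lagrange.interpolate Finset.univ (fun j => g (t j)) (fun j => Ψ (g (t j)))).eval x : ℝ) : ℂ)
      * Complex.exp (Complex.I * κ * x)

/-- Composite moment-free Filon rule `Q_{N,κ,m}^{[a,b]}[f,g] = Σ_{l=1}^N Q_{κ,m}^{[y_{l-1},y_l]}`,
with the nodes on each subinterval supplied by `t`. -/
def compFilonQ (κ : ℝ) (m N : ℕ) (g : ℝ → ℝ) (Ψ : ℝ → ℝ)
    (t : Fin N → Fin (m+1) → ℝ) : ℂ :=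
  ∑ l : Fin N, filonQ κ m g Ψ (t l)

/-- Admissible node families for the composite rule on `[a,b]` with `N` equal subintervals:
on the `l`-th subinterval `[y_l, y_{l+1}]` (`y_l = a + (b-a) l/N`) the `m+1` strictly
increasing nodes include both endpoints. -/
def FilonNodes (a b : ℝ) (m N : ℕ) (t : Fin N → Fin (m+1) → ℝ) : Prop :=
  ∀ l : Fin N, StrictMono (t l) ∧ t l 0 = a + (b-a)*(l:ℝ)/(N:ℝ) ∧
    t l (Fin.last m) = a + (b-a)*((l:ℝ)+1)/(N:ℝ)

/-- `κ_{σ(r)} := κ` if `σ(r) ≤ 1`, and `κ σ(r)` otherwise. -/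
def kappaSigma (κ σr : ℝ) : ℝ := if σr ≤ 1 then κ else κ * σr

/-- Graded node `x_j := κσ^{((j/n)-1)/(r+1)}` of the partition of `Λ = [λ_r, 1]`. -/
def nodeX (κσ : ℝ) (r n j : ℕ) : ℝ := κσ ^ ((((j:ℝ)/(n:ℝ)) - 1)/((r:ℝ)+1))

open Set intervalIntegral

private lemma poly_contDiff (p : Polynomial ℝ) {n : WithTop ℕ∞} :
    ContDiff ℝ n fun x : ℝ => p.eval x := by
  induction p using Polynomial.induction_on' with
  | add p q hp hq => simpa [Polynomial.eval_add] using hp.add hq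
  | monomial k c =>
      simpa [Polynomial.eval_monomial] using (contDiff_const (c := c)).mul (contDiff_id.pow k)

private lemma poly_iterDW (p : Polynomial ℝ) {s : Set ℝ} (hs : UniqueDiffOn ℝ s)
    (k : ℕ) : ∀ x ∈ s,
    iteratedDerivWithin k (fun y : ℝ => p.eval y) s x = (Polynomial.derivative^[k] p).eval x := by
  induction k with
  | zero => intro x hx; simp
  | succ k ih =>
    intro x hx
    rw [iteratedDerivWithin_succ]
    have h1 : derivWithin (iteratedDerivWithin k (fun y : ℝ => p.eval y) s) s x
        = derivWithin (fun y : ℝ => (Polynomial.derivative^[k] p).eval y) s x :=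
      derivWithin_congr (fun y hy => ih y hy) (ih x hx)
    rw [h1, Function.iterate_succ_apply']
    exact Polynomial.derivWithin (p := (Polynomial.derivative^[k] p)) (hs.uniqueDiffWithinAt hx)

private lemma iterDW_subset {f : ℝ → ℝ} {s t : Set ℝ} (hst : s ⊆ t) (hs : UniqueDiffOn ℝ s)
    (ht : UniqueDiffOn ℝ t) {n : ℕ} (hf : ContDiffOn ℝ n f t) :
    ∀ k, k ≤ n → ∀ x ∈ s, iteratedDerivWithin k f s x = iteratedDerivWithin k f t x := by
  intro k
  induction k with
  | zero => intro _ x hx; simp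
  | succ k ih =>
    intro hk x hx
    have hk' : k ≤ n := Nat.le_of_succ_le hk
    rw [iteratedDerivWithin_succ,
        iteratedDerivWithin_succ]
    have h1 : derivWithin (iteratedDerivWithin k f s) s x
        = derivWithin (iteratedDerivWithin k f t) s x :=
      derivWithin_congr (fun y hy => ih hk' y hy) (ih hk' x hx)
    rw [h1]
    exact derivWithin_subset hst (hs x hx)
      ((hf.differentiableOn_iteratedDerivWithin (by exact_mod_cast Nat.lt_of_succ_le hk) ht)
        x (hst hx))

private lemma rolle_step {a b : ℝ} {q : ℕ} (F : ℝ → ℝ) (hF : ContinuousOn F (Set.Icc a b))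
    (z : Fin (q+1) → ℝ) (hz : StrictMono z) (hmem : ∀ i, z i ∈ Set.Icc a b)
    (h0 : ∀ i, F (z i) = 0) :
    ∃ w : Fin q → ℝ, StrictMono w ∧ ∀ i, (w i ∈ Set.Icc a b ∧ w i ∈ Set.Ioo a b)
      ∧ deriv F (w i) = 0 := by
  have key : ∀ i : Fin q, ∃ c ∈ Set.Ioo (z i.castSucc) (z i.succ), deriv F c = 0 := by
    intro i
    have hlt : z i.castSucc < z i.succ := hz Fin.castSucc_lt_succ
    exact exists_deriv_eq_zero hlt
      (hF.mono (Set.Icc_subset_Icc (hmem i.castSucc).1 (hmem i.succ).2))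
      ((h0 _).trans (h0 _).symm)
  choose w hw hw0 using key
  have hmono : StrictMono w := by
    intro i j hij
    have h1 : w i < z i.succ := (hw i).2
    have h2 : z i.succ ≤ z j.castSucc := hz.monotone (by
      have := hij
      rw [Fin.lt_def] at this
      rw [Fin.le_def]
      simpa using this)
    have h3 : z j.castSucc < w j := (hw j).1
    linarith
  refine ⟨w, hmono, fun i => ⟨?_, hw0 i⟩⟩
  have h1 : a ≤ z i.castSucc := (hmem i.castSucc).1
  have h2 : z i.succ ≤ b := (hmem i.succ).2
  have h3 := hw i
  constructor
  · exact ⟨by linarith [h3.1], by linarith [h3.2]⟩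
  · exact ⟨by linarith [h3.1], by linarith [h3.2]⟩





private lemma zeros_of_iterated {a b : ℝ} (hab : a < b) {p : ℕ} {ψ : ℝ → ℝ}
    (hψ : ContDiffOn ℝ p ψ (Set.Icc a b))
    (z : Fin p → ℝ) (hz : StrictMono z) (hmem : ∀ i, z i ∈ Set.Icc a b)
    (h0 : ∀ i, ψ (z i) = 0) :
    ∀ k, k ≤ p → ∃ w : Fin (p - k) → ℝ, StrictMono w ∧ ∀ i,
      w i ∈ Set.Icc a b ∧ iteratedDerivWithin k ψ (Set.Icc a b) (w i) = 0 := by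
  intro k
  induction k with
  | zero =>
    intro _
    exact ⟨z, hz, fun i => ⟨hmem i, by simpa using h0 i⟩⟩
  | succ k ih =>
    intro hk
    obtain ⟨w, hw, hwp⟩ := ih (Nat.le_of_succ_le hk)
    by_cases hq : p - (k+1) = 0
    · exact ⟨fun i => 0, fun i j hij => absurd i.2 (by omega), fun i => absurd i.2 (by omega)⟩
    · have hcard : p - k = (p - (k+1)) + 1 := by omega
      set F := iteratedDerivWithin k ψ (Set.Icc a b) with hF
      have hFc : ContinuousOn F (Set.Icc a b) :=
        hψ.continuousOn_iteratedDerivWithin (by exact_mod_cast Nat.le_of_succ_le hk)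
          (uniqueDiffOn_Icc hab)
      let z' : Fin ((p - (k+1)) + 1) → ℝ := fun i => w (Fin.cast hcard.symm i)
      have hz' : StrictMono z' := fun i j hij => hw (by
        rw [Fin.lt_def] at hij ⊢; simpa using hij)
      obtain ⟨v, hv, hvp⟩ := rolle_step F hFc z' hz'
        (fun i => (hwp _).1) (fun i => (hwp _).2)
      refine ⟨v, hv, fun i => ⟨(hvp i).1.1, ?_⟩⟩
      have hioo := (hvp i).1.2
      rw [iteratedDerivWithin_succ,
        derivWithin_of_mem_nhds (Icc_mem_nhds hioo.1 hioo.2)]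
      exact (hvp i).2

private lemma bound_of_zeros {a b : ℝ} (hab : a < b) {p : ℕ} {ψ : ℝ → ℝ}
    (hψ : ContDiffOn ℝ p ψ (Set.Icc a b)) {M : ℝ}
    (hM : ∀ x ∈ Set.Icc a b, |iteratedDerivWithin p ψ (Set.Icc a b) x| ≤ M)
    (z : Fin p → ℝ) (hz : StrictMono z) (hmem : ∀ i, z i ∈ Set.Icc a b)
    (h0 : ∀ i, ψ (z i) = 0) :
    ∀ d k, k + d = p → ∀ x ∈ Set.Icc a b,
      |iteratedDerivWithin k ψ (Set.Icc a b) x| ≤ M * (b-a)^d := by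
  have hM0 : 0 ≤ M :=
    le_trans (abs_nonneg _) (hM a ⟨le_refl a, hab.le⟩)
  intro d
  induction d with
  | zero =>
    intro k hk x hx
    have : k = p := by omega
    subst this
    simpa using hM x hx
  | succ d ih =>
    intro k hk x hx
    have hkp : k < p := by omega
    obtain ⟨w, hw, hwp⟩ := zeros_of_iterated hab hψ z hz hmem h0 k hkp.le
    have hne : 0 < p - k := by omega
    set i0 : Fin (p - k) := ⟨0, hne⟩ with hi0
    have hdiff : DifferentiableOn ℝ (iteratedDerivWithin k ψ (Set.Icc a b)) (Set.Icc a b) :=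
      hψ.differentiableOn_iteratedDerivWithin (by exact_mod_cast hkp) (uniqueDiffOn_Icc hab)
    have hbound : ∀ y ∈ Set.Icc a b,
        ‖derivWithin (iteratedDerivWithin k ψ (Set.Icc a b)) (Set.Icc a b) y‖
          ≤ M * (b-a)^d := by
      intro y hy
      have := ih (k+1) (by omega) y hy
      rw [iteratedDerivWithin_succ] at this
      simpa [Real.norm_eq_abs] using this
    have key := Convex.norm_image_sub_le_of_norm_derivWithin_le hdiff hbound
      (convex_Icc a b) (hwp i0).1 hx
    have hzero : iteratedDerivWithin k ψ (Set.Icc a b) (w i0) = 0 := (hwp i0).2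
    rw [hzero, sub_zero] at key
    have hdist : ‖x - w i0‖ ≤ b - a := by
      have h1 := (hwp i0).1
      rw [Real.norm_eq_abs, abs_sub_le_iff]
      constructor <;> [linarith [hx.2, h1.1]; linarith [hx.1, h1.2]]
    calc |iteratedDerivWithin k ψ (Set.Icc a b) x|
        ≤ M * (b-a)^d * ‖x - w i0‖ := by simpa [Real.norm_eq_abs] using key
      _ ≤ M * (b-a)^d * (b-a) := by
          exact mul_le_mul_of_nonneg_left hdist
            (mul_nonneg hM0 (pow_nonneg (by linarith) d))
      _ = M * (b-a)^(d+1) := by ring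




private lemma my_ibp {a b : ℝ} (hab : a ≤ b) (u v u' v' : ℝ → ℂ)
    (hu : ∀ x ∈ Set.Icc a b, HasDerivWithinAt u (u' x) (Set.Icc a b) x)
    (hv : ∀ x : ℝ, HasDerivAt v (v' x) x)
    (hcu' : ContinuousOn u' (Set.Icc a b))
    (hcv' : Continuous v') :
    ∫ x in a..b, u x * v' x
      = u b * v b - u a * v a - ∫ x in a..b, u' x * v x := by
  have hvc : Continuous v := by
    have : Differentiable ℝ v := fun x => (hv x).differentiableAt
    exact this.continuous
  have huc : ContinuousOn u (Set.Icc a b) := fun x hx => (hu x hx).continuousWithinAt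
  have hintuv : IntervalIntegrable (fun x => u' x * v x) volume a b := by
    apply ContinuousOn.intervalIntegrable
    rw [Set.uIcc_of_le hab]
    exact hcu'.mul hvc.continuousOn
  have hintuv' : IntervalIntegrable (fun x => u x * v' x) volume a b := by
    apply ContinuousOn.intervalIntegrable
    rw [Set.uIcc_of_le hab]
    exact huc.mul hcv'.continuousOn
  have hsum : ∫ x in a..b, (u' x * v x + u x * v' x)
      = u b * v b - u a * v a := by
    apply integral_eq_sub_of_hasDeriv_right_of_le hab
    · exact huc.mul hvc.continuousOn
    · intro x hx
      have hd : HasDerivAt u (u' x) x :=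
        (hu x (Set.Ioo_subset_Icc_self hx)).hasDerivAt
          (Icc_mem_nhds hx.1 hx.2)
      exact ((hd.mul (hv x)).hasDerivWithinAt)
    · exact hintuv.add hintuv'
  rw [intervalIntegral.integral_add hintuv hintuv'] at hsum
  linear_combination hsum

private lemma exp_deriv (κ : ℝ) (x : ℝ) :
    HasDerivAt (fun y : ℝ => Complex.exp (Complex.I * κ * y))
      (Complex.I * κ * Complex.exp (Complex.I * κ * x)) x := by
  have h0 : HasDerivAt (fun y : ℝ => (y : ℂ)) 1 x := by
    simpa using (hasDerivAt_id x).ofReal_comp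
  have h1 : HasDerivAt (fun y : ℝ => Complex.I * κ * (y : ℂ)) (Complex.I * κ) x := by
    simpa using h0.const_mul (Complex.I * κ)
  simpa [mul_comm] using h1.cexp

private lemma abs_exp_Iκx (κ x : ℝ) : ‖Complex.exp (Complex.I * κ * x)‖ = 1 := by
  rw [Complex.norm_exp]
  have : (Complex.I * κ * x).re = 0 := by simp
  rw [this, Real.exp_zero]

private lemma osc_bound {a b : ℝ} (hab : a ≤ b) {κ : ℝ} (hκ : 0 < κ)
    (φ φ' φ'' : ℝ → ℝ)
    (h1 : ∀ x ∈ Set.Icc a b, HasDerivWithinAt φ (φ' x) (Set.Icc a b) x)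
    (h2 : ∀ x ∈ Set.Icc a b, HasDerivWithinAt φ' (φ'' x) (Set.Icc a b) x)
    (hc2 : ContinuousOn φ'' (Set.Icc a b))
    (ha0 : φ a = 0) (hb0 : φ b = 0)
    {B1 B2 : ℝ} (hB1 : ∀ x ∈ Set.Icc a b, |φ' x| ≤ B1)
    (hB2 : ∀ x ∈ Set.Icc a b, |φ'' x| ≤ B2) :
    ‖∫ x in a..b, (φ x : ℂ) * Complex.exp (Complex.I * κ * x)‖
      ≤ (2*B1 + (b-a)*B2)/κ^2 := by
  set c : ℂ := Complex.I * κ with hc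
  have hc0 : c ≠ 0 := by
    simp [hc, Complex.ext_iff, hκ.ne']
  have habsc : ‖c‖ = κ := by
    rw [hc, norm_mul, Complex.norm_I, one_mul, Complex.norm_real, Real.norm_eq_abs, abs_of_pos hκ]
  set E : ℝ → ℂ := fun x => Complex.exp (Complex.I * κ * x) with hE
  have hEd : ∀ x : ℝ, HasDerivAt E (c * E x) x := fun x => exp_deriv κ x
  have hv : ∀ x : ℝ, HasDerivAt (fun y => E y / c) (E x) x := by
    intro x
    simpa [div_mul_eq_mul_div, mul_comm, mul_div_assoc, mul_div_cancel_left₀ _ hc0]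
      using (hEd x).div_const c
  have hG : ∀ x : ℝ, HasDerivAt (fun y => E y / c^2) (E x / c) x := by
    intro x
    have := (hEd x).div_const (c^2)
    rw [show c * E x / c^2 = E x / c by rw [pow_two, mul_div_mul_left _ _ hc0]] at this
    exact this
  have hu1 : ∀ x ∈ Set.Icc a b,
      HasDerivWithinAt (fun y => (φ y : ℂ)) ((φ' x : ℂ)) (Set.Icc a b) x := fun x hx =>
    Complex.ofRealCLM.hasFDerivAt.comp_hasDerivWithinAt x (h1 x hx)
  have hu2 : ∀ x ∈ Set.Icc a b,
      HasDerivWithinAt (fun y => (φ' y : ℂ)) ((φ'' x : ℂ)) (Set.Icc a b) x := fun x hx =>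
    Complex.ofRealCLM.hasFDerivAt.comp_hasDerivWithinAt x (h2 x hx)
  have hcφ' : ContinuousOn (fun y => (φ' y : ℂ)) (Set.Icc a b) :=
    Complex.continuous_ofReal.comp_continuousOn (fun x hx => (h2 x hx).continuousWithinAt)
  have hcφ'' : ContinuousOn (fun y => (φ'' y : ℂ)) (Set.Icc a b) :=
    Complex.continuous_ofReal.comp_continuousOn hc2
  have hEc : Continuous E := by fun_prop
  have step1 : ∫ x in a..b, (φ x : ℂ) * E x
      = - ∫ x in a..b, (φ' x : ℂ) * (E x / c) := by
    have h := my_ibp hab (fun y => (φ y : ℂ)) (fun y => E y / c) (fun y => (φ' y : ℂ)) E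
      hu1 hv hcφ' hEc
    simp only [ha0, hb0, Complex.ofReal_zero, zero_mul, sub_zero, zero_sub] at h
    exact h
  have step2 : ∫ x in a..b, (φ' x : ℂ) * (E x / c)
      = (φ' b : ℂ) * (E b / c^2) - (φ' a : ℂ) * (E a / c^2)
        - ∫ x in a..b, (φ'' x : ℂ) * (E x / c^2) :=
    my_ibp hab (fun y => (φ' y : ℂ)) (fun y => E y / c^2) (fun y => (φ'' y : ℂ))
      (fun y => E y / c) hu2 hG hcφ'' (hEc.div_const c)
  have hB2' : 0 ≤ B2 := le_trans (abs_nonneg _) (hB2 a ⟨le_refl a, hab⟩)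
  have habsE : ∀ x : ℝ, ‖E x‖ = 1 := fun x => abs_exp_Iκx κ x
  have hGabs : ∀ x : ℝ, ‖E x / c^2‖ = 1/κ^2 := by
    intro x
    rw [norm_div, habsE, norm_pow, habsc]
  have hbd : ∀ y ∈ Set.Icc a b, ‖(φ' y : ℂ) * (E y / c^2)‖ ≤ B1 * (1/κ^2) := by
    intro y hy
    rw [norm_mul, hGabs, Complex.norm_real, Real.norm_eq_abs]
    exact mul_le_mul_of_nonneg_right (hB1 y hy) (by positivity)
  have hint_bound : ‖∫ x in a..b, (φ'' x : ℂ) * (E x / c^2)‖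
      ≤ (B2/κ^2) * |b - a| := by
    apply intervalIntegral.norm_integral_le_of_norm_le_const
    intro x hx
    have hx' : x ∈ Set.Icc a b := by
      rw [Set.uIoc_of_le hab] at hx
      exact ⟨hx.1.le, hx.2⟩
    rw [norm_mul, hGabs, Complex.norm_real, Real.norm_eq_abs]
    calc |φ'' x| * (1/κ^2) ≤ B2 * (1/κ^2) :=
          mul_le_mul_of_nonneg_right (hB2 x hx') (by positivity)
      _ = B2/κ^2 := by ring
  calc ‖∫ x in a..b, (φ x : ℂ) * E x‖
      = ‖∫ x in a..b, (φ' x : ℂ) * (E x / c)‖ := by rw [step1, norm_neg]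
    _ ≤ ‖(φ' b : ℂ) * (E b / c^2)‖ + ‖(φ' a : ℂ) * (E a / c^2)‖
        + ‖∫ x in a..b, (φ'' x : ℂ) * (E x / c^2)‖ := by
        rw [step2]
        exact (norm_sub_le _ _).trans (add_le_add (norm_sub_le _ _) le_rfl)
    _ ≤ B1 * (1/κ^2) + B1 * (1/κ^2) + (B2/κ^2) * (b - a) := by
        have h1' := hbd b ⟨hab, le_refl b⟩
        have h2' := hbd a ⟨le_refl a, hab⟩
        have h3' := hint_bound
        rw [abs_of_nonneg (sub_nonneg.mpr hab)] at h3'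
        exact add_le_add (add_le_add h1' h2') h3'
    _ = (2*B1 + (b-a)*B2)/κ^2 := by ring

private lemma interval_err {α : ℝ} (hα : α ∈ Set.Ioo (-1:ℝ) 1) {m : ℕ} (hm : 1 ≤ m)
    {f : ℝ → ℝ} (hfC : ContDiffOn ℝ (m+1) f (Set.Ioc 0 1))
    {cf : ℝ} (hcf : 0 < cf)
    (hfb : ∀ j ≤ m+1, ∀ x ∈ Set.Ioc (0:ℝ) 1,
      |iteratedDerivWithin j f (Set.Ioc 0 1) x| ≤ cf * x ^ (α - (j:ℝ)))
    {κ a b : ℝ} (hκ : 1 < κ) (ha : 0 < a) (hab : a < b) (hb : b ≤ 1)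
    (v : Fin (m+1) → ℝ) (hv : StrictMono v) (hv0 : v 0 = a) (hvl : v (Fin.last m) = b) :
    ‖(∫ x in a..b, (f x : ℂ) * Complex.exp (Complex.I * κ * x))
        - ∫ x in a..b,
            (((Lagrange.interpolate Finset.univ v (fun j => f (v j))).eval x : ℝ) : ℂ)
            * Complex.exp (Complex.I * κ * x)‖
      ≤ 3 * (cf * a ^ (α - ((m:ℝ)+1))) * (b-a)^m / κ^2 := by
  have hκ0 : (0:ℝ) < κ := lt_trans one_pos hκ
  have hsub : Set.Icc a b ⊆ Set.Ioc (0:ℝ) 1 := fun x hx => ⟨lt_of_lt_of_le ha hx.1, le_trans hx.2 hb⟩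
  have hud : UniqueDiffOn ℝ (Set.Icc a b) := uniqueDiffOn_Icc hab
  set P : Polynomial ℝ := Lagrange.interpolate Finset.univ v (fun j => f (v j)) with hP
  set ψ : ℝ → ℝ := f - fun x => P.eval x with hψ
  have hψx : ∀ x, ψ x = f x - P.eval x := fun x => rfl
  have hfC' : ContDiffOn ℝ (m+1) f (Set.Icc a b) := hfC.mono hsub
  have hPC : ContDiffOn ℝ (m+1) (fun x : ℝ => P.eval x) (Set.Icc a b) :=
    (poly_contDiff P).contDiffOn
  have hψC : ContDiffOn ℝ (m+1) ψ (Set.Icc a b) := hfC'.sub hPC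
  -- nodes are in [a,b] and are zeros of ψ
  have hvmem : ∀ i, v i ∈ Set.Icc a b := by
    intro i
    exact ⟨hv0 ▸ hv.monotone (Fin.zero_le i), hvl ▸ hv.monotone (Fin.le_last i)⟩
  have hvzero : ∀ i, ψ (v i) = 0 := by
    intro i
    rw [hψx, Lagrange.eval_interpolate_at_node (r := fun j => f (v j))
      (hv.injective.injOn) (Finset.mem_univ i), sub_self]
  -- the (m+1)-st derivative of ψ is that of f
  have hPdeg : P.natDegree < m + 1 := by
    by_cases h0 : P = 0
    · simp [h0]
    · rw [Polynomial.natDegree_lt_iff_degree_lt h0]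
      have := Lagrange.degree_interpolate_lt (s := Finset.univ) (r := fun j => f (v j))
        (hv.injective.injOn)
      rw [Finset.card_univ, Fintype.card_fin] at this
      exact this
  set M : ℝ := cf * a ^ (α - ((m:ℝ)+1)) with hM
  have hMb : ∀ x ∈ Set.Icc a b,
      |iteratedDerivWithin (m+1) ψ (Set.Icc a b) x| ≤ M := by
    intro x hx
    have hsubeq : iteratedDerivWithin (m+1) ψ (Set.Icc a b) x
        = iteratedDerivWithin (m+1) f (Set.Icc a b) x
          - iteratedDerivWithin (m+1) (fun x : ℝ => P.eval x) (Set.Icc a b) x := by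
      rw [hψ]
      exact iteratedDerivWithin_sub hx hud (hfC' x hx) (hPC x hx)
    have hp0 : iteratedDerivWithin (m+1) (fun x : ℝ => P.eval x) (Set.Icc a b) x = 0 := by
      rw [poly_iterDW P hud (m+1) x hx, Polynomial.iterate_derivative_eq_zero hPdeg]
      simp
    have hfsub : iteratedDerivWithin (m+1) f (Set.Icc a b) x
        = iteratedDerivWithin (m+1) f (Set.Ioc 0 1) x :=
      iterDW_subset hsub hud (uniqueDiffOn_Ioc 0 1) hfC (m+1) le_rfl x hx
    rw [hsubeq, hp0, sub_zero, hfsub]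
    calc |iteratedDerivWithin (m+1) f (Set.Ioc 0 1) x|
        ≤ cf * x ^ (α - ((m+1:ℕ):ℝ)) := hfb (m+1) le_rfl x (hsub hx)
      _ ≤ cf * a ^ (α - ((m:ℝ)+1)) := by
          have he : α - ((m+1:ℕ):ℝ) = α - ((m:ℝ)+1) := by push_cast; ring
          rw [he]
          refine mul_le_mul_of_nonneg_left ?_ hcf.le
          exact Real.rpow_le_rpow_of_nonpos ha hx.1 (by
            have := hα.2
            push_cast
            nlinarith [Nat.one_le_cast (α := ℝ) |>.mpr hm])
  -- derivative bounds
  have hbd := bound_of_zeros hab (p := m+1) hψC hMb v hv hvmem hvzero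
  have hB1 : ∀ x ∈ Set.Icc a b, |iteratedDerivWithin 1 ψ (Set.Icc a b) x| ≤ M * (b-a)^m :=
    hbd m 1 (by omega)
  have hB2 : ∀ x ∈ Set.Icc a b, |iteratedDerivWithin 2 ψ (Set.Icc a b) x| ≤ M * (b-a)^(m-1) :=
    hbd (m-1) 2 (by omega)
  -- derivative structure
  have hdiff0 : DifferentiableOn ℝ ψ (Set.Icc a b) :=
    hψC.differentiableOn (by simp)
  have h1 : ∀ x ∈ Set.Icc a b,
      HasDerivWithinAt ψ (iteratedDerivWithin 1 ψ (Set.Icc a b) x) (Set.Icc a b) x := by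
    intro x hx
    have := (hdiff0 x hx).hasDerivWithinAt
    rwa [← iteratedDerivWithin_one] at this
  have hdiff1 : DifferentiableOn ℝ (iteratedDerivWithin 1 ψ (Set.Icc a b)) (Set.Icc a b) :=
    hψC.differentiableOn_iteratedDerivWithin (by exact_mod_cast Nat.lt_succ_of_le hm) hud
  have h2 : ∀ x ∈ Set.Icc a b,
      HasDerivWithinAt (iteratedDerivWithin 1 ψ (Set.Icc a b))
        (iteratedDerivWithin 2 ψ (Set.Icc a b) x) (Set.Icc a b) x := by
    intro x hx
    have := (hdiff1 x hx).hasDerivWithinAt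
    rwa [← iteratedDerivWithin_succ] at this
  have hc2 : ContinuousOn (iteratedDerivWithin 2 ψ (Set.Icc a b)) (Set.Icc a b) :=
    hψC.continuousOn_iteratedDerivWithin (by exact_mod_cast Nat.succ_le_succ hm) hud
  have ha0 : ψ a = 0 := hv0 ▸ hvzero 0
  have hb0 : ψ b = 0 := hvl ▸ hvzero (Fin.last m)
  -- rewrite the difference of integrals
  have hEint : ∀ g : ℝ → ℝ, ContinuousOn g (Set.Icc a b) →
      IntervalIntegrable (fun x => (g x : ℂ) * Complex.exp (Complex.I * κ * x)) volume a b := by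
    intro g hg
    apply ContinuousOn.intervalIntegrable
    rw [Set.uIcc_of_le hab.le]
    exact (Complex.continuous_ofReal.comp_continuousOn hg).mul
      (Continuous.continuousOn (by fun_prop))
  have hfcont : ContinuousOn f (Set.Icc a b) := hfC'.continuousOn
  have hPcont : ContinuousOn (fun x : ℝ => P.eval x) (Set.Icc a b) := hPC.continuousOn
  have hdiffint : (∫ x in a..b, (f x : ℂ) * Complex.exp (Complex.I * κ * x))
        - ∫ x in a..b, ((P.eval x : ℝ) : ℂ) * Complex.exp (Complex.I * κ * x)
      = ∫ x in a..b, (ψ x : ℂ) * Complex.exp (Complex.I * κ * x) := by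
    rw [← intervalIntegral.integral_sub (hEint f hfcont) (hEint _ hPcont)]
    congr 1
    funext x
    rw [hψx]
    push_cast
    ring
  rw [hdiffint]
  -- apply the oscillatory bound
  have hosc := osc_bound hab.le hκ0 ψ (iteratedDerivWithin 1 ψ (Set.Icc a b))
    (iteratedDerivWithin 2 ψ (Set.Icc a b)) h1 h2 hc2 ha0 hb0 hB1 hB2
  refine le_trans hosc ?_
  have hpow : (b-a) * (b-a)^(m-1) = (b-a)^m := by
    rw [← pow_succ']
    congr 1
    omega
  have : 2*(M * (b-a)^m) + (b-a)*(M * (b-a)^(m-1)) = 3 * M * (b-a)^m := by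
    rw [show (b-a)*(M * (b-a)^(m-1)) = M * ((b-a)*(b-a)^(m-1)) by ring, hpow]
    ring
  rw [this]

/-- polynomial-order error bound for the composite moment-free Filon rule on
`Λ = [1/κ, 1]` for the linear oscillator `g(x) = x`, with partition `x_j = κ^{j/n-1}` and
`N_j = 1`. -/
theorem stmt_12 (α : ℝ) (hα : α ∈ Set.Ioo (-1:ℝ) 1) (m : ℕ) (hm : 1 ≤ m)
    (f : ℝ → ℝ)
    (hfC : ContDiffOn ℝ (m+1) f (Set.Ioc 0 1))
    (hfb : ∃ cf : ℝ, 0 < cf ∧ ∀ j ≤ m+1, ∀ x ∈ Set.Ioc (0:ℝ) 1,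
      |iteratedDerivWithin j f (Set.Ioc 0 1) x| ≤ cf * x ^ (α - (j:ℝ))) :
    ∃ c : ℝ, 0 < c ∧ ∀ (κ : ℝ) (n : ℕ), 1 < κ → 1 ≤ n →
      Real.log κ / Real.log 2 ≤ (n:ℝ) →
      ∀ (t : (j : Fin n) → Fin 1 → Fin (m+1) → ℝ),
      (∀ j : Fin n, FilonNodes (nodeX κ 0 n j.val) (nodeX κ 0 n (j.val+1)) m 1 (t j)) →
      ‖oscInt κ f (fun y => y) (1/κ) 1 -
          ∑ j : Fin n, compFilonQ κ m 1 (fun y => y) f (t j)‖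
        ≤ c * κ ^ (-α-1) * Real.log κ * (κ ^ ((1:ℝ)/(n:ℝ)) - 1)^(m-1) := by
  obtain ⟨cf, hcf, hfb⟩ := hfb
  refine ⟨6 * cf, by positivity, ?_⟩
  intro κ n hκ hn hlog t ht
  have hκ0 : (0:ℝ) < κ := lt_trans one_pos hκ
  have hn0 : (0:ℝ) < (n:ℝ) := by exact_mod_cast hn
  set θ : ℝ := κ ^ ((1:ℝ)/(n:ℝ)) - 1 with hθdef
  set x_ : ℕ → ℝ := fun j => κ ^ (((j:ℝ)/(n:ℝ)) - 1) with hxdef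
  have hnodeX : ∀ j : ℕ, nodeX κ 0 n j = x_ j := by
    intro j; simp [nodeX, hxdef]
  have hxpos : ∀ j, 0 < x_ j := fun j => Real.rpow_pos_of_pos hκ0 _
  have hxmono : ∀ j : ℕ, x_ j < x_ (j+1) := by
    intro j
    apply Real.rpow_lt_rpow_of_exponent_lt hκ
    have h1 : (j:ℝ)/(n:ℝ) < ((j:ℝ)+1)/(n:ℝ) := (div_lt_div_iff_of_pos_right hn0).mpr (by linarith)
    push_cast
    linarith
  have hxle1 : ∀ j : ℕ, j ≤ n → x_ j ≤ 1 := by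
    intro j hj
    apply Real.rpow_le_one_of_one_le_of_nonpos hκ.le
    have : (j:ℝ) ≤ (n:ℝ) := by exact_mod_cast hj
    have : (j:ℝ)/(n:ℝ) ≤ 1 := by
      rw [div_le_one hn0]; exact this
    linarith
  have hx0 : x_ 0 = 1/κ := by
    rw [hxdef]
    simp only [Nat.cast_zero, zero_div, zero_sub]
    rw [Real.rpow_neg_one, one_div]
  have hxn : x_ n = 1 := by
    rw [hxdef]
    simp [div_self hn0.ne']
  have hθpos : 0 < θ := by
    rw [hθdef, sub_pos]
    rw [show (1:ℝ) = κ ^ (0:ℝ) by rw [Real.rpow_zero]]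
    exact Real.rpow_lt_rpow_of_exponent_lt hκ (by positivity)
  have hstep : ∀ j : ℕ, x_ (j+1) - x_ j = x_ j * θ := by
    intro j
    have he : ((j:ℝ)+1)/(n:ℝ) - 1 = ((j:ℝ)/(n:ℝ) - 1) + (1:ℝ)/(n:ℝ) := by
      field_simp
      ring
    have : x_ (j+1) = x_ j * κ ^ ((1:ℝ)/(n:ℝ)) := by
      rw [hxdef]
      push_cast
      rw [he, Real.rpow_add hκ0]
    rw [this, hθdef]
    ring
  -- κ^{1/n} ≤ 2 and n θ ≤ 2 log κ
  have hlogκ : 0 < Real.log κ := Real.log_pos hκ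
  have hlog2 : 0 < Real.log 2 := Real.log_pos one_lt_two
  have hT : Real.log κ * ((1:ℝ)/(n:ℝ)) ≤ Real.log 2 := by
    rw [div_le_iff₀ hlog2] at hlog
    calc Real.log κ * ((1:ℝ)/(n:ℝ)) ≤ ((n:ℝ) * Real.log 2) * ((1:ℝ)/(n:ℝ)) := by
          apply mul_le_mul_of_nonneg_right hlog (by positivity)
      _ = Real.log 2 := by field_simp
  have hexp2 : κ ^ ((1:ℝ)/(n:ℝ)) ≤ 2 := by
    rw [Real.rpow_def_of_pos hκ0]
    calc Real.exp (Real.log κ * ((1:ℝ)/(n:ℝ))) ≤ Real.exp (Real.log 2) :=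
          Real.exp_le_exp.mpr hT
      _ = 2 := Real.exp_log two_pos
  have hnθ : (n:ℝ) * θ ≤ 2 * Real.log κ := by
    set s : ℝ := Real.log κ * ((1:ℝ)/(n:ℝ)) with hs
    have hs0 : 0 ≤ s := by positivity
    have hes : κ ^ ((1:ℝ)/(n:ℝ)) = Real.exp s := Real.rpow_def_of_pos hκ0 _
    have h1 : 1 - s ≤ Real.exp (-s) := by
      have := Real.add_one_le_exp (-s)
      linarith
    have h2 : (1-s) * Real.exp s ≤ 1 := by
      have := mul_le_mul_of_nonneg_right h1 (Real.exp_pos s).le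
      rwa [← Real.exp_add, neg_add_cancel, Real.exp_zero] at this
    have h3 : θ ≤ s * Real.exp s := by
      rw [hθdef, hes]
      nlinarith
    have h4 : θ ≤ 2 * s := by
      rw [hes] at hexp2
      nlinarith
    calc (n:ℝ) * θ ≤ (n:ℝ) * (2*s) := by
          apply mul_le_mul_of_nonneg_left h4 hn0.le
      _ = 2 * Real.log κ := by
          rw [hs]; field_simp
  -- integrability pieces
  have hEint : ∀ (aa bb : ℝ), 0 < aa → bb ≤ 1 → aa ≤ bb →
      IntervalIntegrable (fun x => (f x : ℂ) * Complex.exp (Complex.I * κ * x)) volume aa bb := by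
    intro aa bb haa hbb habb
    apply ContinuousOn.intervalIntegrable
    rw [Set.uIcc_of_le habb]
    have hsub : Set.Icc aa bb ⊆ Set.Ioc (0:ℝ) 1 := fun x hx =>
      ⟨lt_of_lt_of_le haa hx.1, le_trans hx.2 hbb⟩
    exact (Complex.continuous_ofReal.comp_continuousOn (hfC.continuousOn.mono hsub)).mul
      (Continuous.continuousOn (by fun_prop))
  -- telescoping
  have htel : oscInt κ f (fun y => y) (1/κ) 1
      = ∑ j ∈ Finset.range n, ∫ x in (x_ j)..(x_ (j+1)),
          (f x : ℂ) * Complex.exp (Complex.I * κ * x) := by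
    rw [oscInt]
    rw [← hx0, ← hxn]
    rw [intervalIntegral.sum_integral_adjacent_intervals]
    intro k hk
    exact hEint (x_ k) (x_ (k+1)) (hxpos k) (hxle1 (k+1) hk) (hxmono k).le
  -- per-interval node data
  have hnode : ∀ j : Fin n, StrictMono (t j 0) ∧ t j 0 0 = x_ j.val ∧
      t j 0 (Fin.last m) = x_ (j.val+1) := by
    intro j
    obtain ⟨h1, h2, h3⟩ := ht j 0
    refine ⟨h1, ?_, ?_⟩
    · rw [h2, hnodeX, hnodeX]
      norm_num
    · rw [h3, hnodeX, hnodeX]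
      norm_num
  -- rewrite the quadrature as integrals of interpolants
  have hQ : ∀ j : Fin n, compFilonQ κ m 1 (fun y => y) f (t j)
      = ∫ x in (x_ j.val)..(x_ (j.val+1)),
          (((Lagrange.interpolate Finset.univ (t j 0) (fun i => f (t j 0 i))).eval x : ℝ) : ℂ)
          * Complex.exp (Complex.I * κ * x) := by
    intro j
    rw [compFilonQ, Fin.sum_univ_one, filonQ, (hnode j).2.1, (hnode j).2.2]
  -- per-interval error bound
  set B : ℝ := 3 * cf * (κ ^ ((1:ℝ)-α)) * θ^m / κ^2 with hB
  have hperr : ∀ j : Fin n,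
      ‖(∫ x in (x_ j.val)..(x_ (j.val+1)),
            (f x : ℂ) * Complex.exp (Complex.I * κ * x))
          - compFilonQ κ m 1 (fun y => y) f (t j)‖ ≤ B := by
    intro j
    rw [hQ j]
    have hja : (j:ℕ) ≤ n := j.2.le
    have herr := interval_err hα hm hfC hcf hfb hκ (hxpos j.val) (hxmono j.val)
      (hxle1 (j.val+1) j.2) (t j 0) (hnode j).1 (hnode j).2.1 (hnode j).2.2
    refine le_trans herr ?_
    rw [hB]
    -- 3 * (cf * a^(α-m-1)) * (b-a)^m / κ^2 ≤ 3cf κ^{1-α} θ^m / κ^2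
    have ha := hxpos j.val
    have hgap : (x_ (j.val+1) - x_ j.val)^m = (x_ j.val)^m * θ^m := by
      rw [hstep j.val, mul_pow]
    rw [hgap]
    rw [div_le_div_iff_of_pos_right (by positivity)]
    have hcollect : (x_ j.val) ^ (α - ((m:ℝ)+1)) * (x_ j.val)^m
        = (x_ j.val) ^ (α - 1) := by
      rw [← Real.rpow_natCast (x_ j.val) m, ← Real.rpow_add ha]
      congr 1
      ring
    have hxa : (x_ j.val) ^ (α - 1) ≤ κ ^ ((1:ℝ)-α) := by
      rw [hxdef]
      rw [← Real.rpow_mul hκ0.le]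
      apply Real.rpow_le_rpow_of_exponent_le hκ.le
      have h1 : -1 ≤ (j.val:ℝ)/(n:ℝ) - 1 := by
        have : (0:ℝ) ≤ (j.val:ℝ)/(n:ℝ) := by positivity
        linarith
      have h2 : α - 1 ≤ 0 := by linarith [hα.2]
      nlinarith
    calc 3 * (cf * (x_ j.val) ^ (α - ((m:ℝ)+1))) * ((x_ j.val)^m * θ^m)
        = 3 * cf * ((x_ j.val) ^ (α - ((m:ℝ)+1)) * (x_ j.val)^m) * θ^m := by ring
      _ = 3 * cf * (x_ j.val) ^ (α - 1) * θ^m := by rw [hcollect]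
      _ ≤ 3 * cf * (κ ^ ((1:ℝ)-α)) * θ^m := by
          apply mul_le_mul_of_nonneg_right ?_ (by positivity)
          apply mul_le_mul_of_nonneg_left hxa (by positivity)
  -- assemble
  have hsplit : oscInt κ f (fun y => y) (1/κ) 1 -
        ∑ j : Fin n, compFilonQ κ m 1 (fun y => y) f (t j)
      = ∑ j : Fin n, ((∫ x in (x_ j.val)..(x_ (j.val+1)),
            (f x : ℂ) * Complex.exp (Complex.I * κ * x))
          - compFilonQ κ m 1 (fun y => y) f (t j)) := by
    rw [Finset.sum_sub_distrib, htel, Fin.sum_univ_eq_sum_range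
      (fun j => ∫ x in (x_ j)..(x_ (j+1)), (f x : ℂ) * Complex.exp (Complex.I * κ * x)) n]
  rw [hsplit]
  have habs : ‖∑ j : Fin n, ((∫ x in (x_ j.val)..(x_ (j.val+1)),
            (f x : ℂ) * Complex.exp (Complex.I * κ * x))
          - compFilonQ κ m 1 (fun y => y) f (t j))‖ ≤ (n:ℝ) * B := by
    refine le_trans (norm_sum_le _ _) ?_
    calc ∑ j : Fin n, ‖(∫ x in (x_ j.val)..(x_ (j.val+1)),
            (f x : ℂ) * Complex.exp (Complex.I * κ * x))
          - compFilonQ κ m 1 (fun y => y) f (t j)‖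
        ≤ ∑ _j : Fin n, B := Finset.sum_le_sum (fun j _ => hperr j)
      _ = (n:ℝ) * B := by
          rw [Finset.sum_const, Finset.card_univ, Fintype.card_fin, nsmul_eq_mul]
  refine le_trans habs ?_
  -- final numeric estimate
  have hpowm : θ^m = θ^(m-1) * θ := by
    rw [← pow_succ]
    congr 1
    omega
  have hrpow : κ ^ ((1:ℝ)-α) / κ^2 = κ ^ (-α-1) := by
    rw [show (κ:ℝ)^2 = κ ^ ((2:ℕ):ℝ) by rw [Real.rpow_natCast], ← Real.rpow_sub hκ0]
    congr 1
    push_cast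
    ring
  calc (n:ℝ) * B
      = (3 * cf * (κ ^ ((1:ℝ)-α)) / κ^2 * θ^(m-1)) * ((n:ℝ) * θ) := by
        rw [hB, hpowm]; ring
    _ ≤ (3 * cf * (κ ^ ((1:ℝ)-α)) / κ^2 * θ^(m-1)) * (2 * Real.log κ) := by
        apply mul_le_mul_of_nonneg_left hnθ (by positivity)
    _ = 6 * cf * (κ ^ ((1:ℝ)-α) / κ^2) * Real.log κ * θ^(m-1) := by ring
    _ = 6 * cf * κ ^ (-α-1) * Real.log κ * θ^(m-1) := by rw [hrpow]
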